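/- The Wigner–Yanase–Dyson skew covariance ℐ(A,A) := -(1/2)∫₀¹ Tr[[A,π^s][A,π^{1-s}]] ds is nonnegative for every Hermitian A, and vanishes if [A,π]=0. -/

import Mathlib

open Matrix MeasureTheory ComplexOrder

/-- `mpow π hπ s` is the matrix power `π ^ s` for `s : ℝ`, defined via the spectral
decomposition of the Hermitian matrix `π`. -/
noncomputable def mpow {n : ℕ} (π : Matrix (Fin n) (Fin n) ℂ) (hπ : π.IsHermitian) (s : ℝ) :
    Matrix (Fin n) (Fin n) ℂ :=
  (hπ.eigenvectorUnitary : Matrix (Fin n) (Fin n) ℂ) *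
    Matrix.diagonal (fun i => ((hπ.eigenvalues i ^ s : ℝ) : ℂ)) *
    star (hπ.eigenvectorUnitary : Matrix (Fin n) (Fin n) ℂ)

/-- The logarithmic matrix mean `𝕁(B) = ∫₀¹ π^s B π^{1-s} ds`, defined entrywise. -/
noncomputable def Jmean {n : ℕ} (π : Matrix (Fin n) (Fin n) ℂ) (hπ : π.IsHermitian)
    (B : Matrix (Fin n) (Fin n) ℂ) : Matrix (Fin n) (Fin n) ℂ :=
  Matrix.of fun i j => ∫ s in (0:ℝ)..1, (mpow π hπ s * B * mpow π hπ (1 - s)) i j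

set_option maxHeartbeats 1000000

/-- The Wigner–Yanase–Dyson skew covariance
`ℐ(A,A) = -(1/2) ∫₀¹ Tr[[A,π^s][A,π^{1-s}]] ds` is real and nonnegative for Hermitian `A`,
and vanishes when `[A,π] = 0`. -/
theorem stmt5 {n : ℕ} (π : Matrix (Fin n) (Fin n) ℂ) (hπ : π.PosDef) (htr : π.trace = 1)
    (A : Matrix (Fin n) (Fin n) ℂ) (hA : A.IsHermitian) :
    ((-(1/2 : ℂ)) * ∫ s in (0:ℝ)..1,
      ((A * mpow π hπ.1 s - mpow π hπ.1 s * A) *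
        (A * mpow π hπ.1 (1 - s) - mpow π hπ.1 (1 - s) * A)).trace).im = 0 ∧
    0 ≤ ((-(1/2 : ℂ)) * ∫ s in (0:ℝ)..1,
      ((A * mpow π hπ.1 s - mpow π hπ.1 s * A) *
        (A * mpow π hπ.1 (1 - s) - mpow π hπ.1 (1 - s) * A)).trace).re ∧
    (A * π - π * A = 0 →
      ((-(1/2 : ℂ)) * ∫ s in (0:ℝ)..1,
        ((A * mpow π hπ.1 s - mpow π hπ.1 s * A) *
          (A * mpow π hπ.1 (1 - s) - mpow π hπ.1 (1 - s) * A)).trace) = 0) := by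
  classical
  set U : Matrix (Fin n) (Fin n) ℂ := (hπ.1.eigenvectorUnitary : Matrix (Fin n) (Fin n) ℂ)
    with hUdef
  set lam : Fin n → ℝ := hπ.1.eigenvalues with hlamdef
  have hU1 : star U * U = 1 := by
    simpa [hUdef] using hπ.1.eigenvectorUnitary.2.1
  have hU2 : U * star U = 1 := by
    simpa [hUdef] using hπ.1.eigenvectorUnitary.2.2
  have hc1 : ∀ X : Matrix (Fin n) (Fin n) ℂ, star U * (U * X) = X := fun X => by
    rw [← mul_assoc, hU1, one_mul]
  have hc2 : ∀ X : Matrix (Fin n) (Fin n) ℂ, U * (star U * X) = X := fun X => by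
    rw [← mul_assoc, hU2, one_mul]
  set B : Matrix (Fin n) (Fin n) ℂ := star U * A * U with hBdef
  have hBH : ∀ i j, B j i = starRingEnd ℂ (B i j) := by
    intro i j
    have h : Bᴴ = B := by
      rw [hBdef]
      simp [Matrix.conjTranspose_mul, ← Matrix.star_eq_conjTranspose, hA.eq, mul_assoc,
        Matrix.star_eq_conjTranspose, hA.eq]
    conv_lhs => rw [← h]
    simp [Matrix.conjTranspose_apply]
  have hAeq : A = U * B * star U := by
    rw [hBdef]
    simp only [mul_assoc, hc2, hU2, Matrix.mul_one]
  set D : ℝ → Matrix (Fin n) (Fin n) ℂ :=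
    fun s => Matrix.diagonal (fun i => ((lam i ^ s : ℝ) : ℂ)) with hDdef
  have hmpow : ∀ s : ℝ, mpow π hπ.1 s = U * D s * star U := fun s => rfl
  -- real function
  set F : Fin n → Fin n → ℝ → ℝ → ℝ := fun i j s t =>
    Complex.normSq (B i j) * ((lam j ^ s - lam i ^ s) * (lam j ^ t - lam i ^ t)) with hFdef
  have htr2 : ∀ (X Y : Matrix (Fin n) (Fin n) ℂ), (X * Y).trace = ∑ i, ∑ j, X i j * Y j i := by
    intro X Y
    simp [Matrix.trace, Matrix.diag, Matrix.mul_apply]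
  have key : ∀ s t : ℝ,
      ((A * mpow π hπ.1 s - mpow π hπ.1 s * A) *
        (A * mpow π hπ.1 t - mpow π hπ.1 t * A)).trace
      = ((-(∑ i, ∑ j, F i j s t) : ℝ) : ℂ) := by
    intro s t
    have hX : ∀ u : ℝ, A * mpow π hπ.1 u - mpow π hπ.1 u * A
        = U * (B * D u - D u * B) * star U := by
      intro u
      conv_lhs => rw [hmpow, hAeq]
      rw [Matrix.mul_sub, Matrix.sub_mul]
      congr 1 <;> simp only [mul_assoc, hc1, hc2]
    rw [hX s, hX t]
    have hmm : U * (B * D s - D s * B) * star U * (U * (B * D t - D t * B) * star U)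
        = U * ((B * D s - D s * B) * (B * D t - D t * B)) * star U := by
      simp only [mul_assoc, hc1]
    rw [hmm, Matrix.trace_mul_cycle, ← mul_assoc, hU1, one_mul, htr2]
    push_cast
    rw [← Finset.sum_neg_distrib]
    refine Finset.sum_congr rfl fun i _ => ?_
    rw [← Finset.sum_neg_distrib]
    refine Finset.sum_congr rfl fun j _ => ?_
    simp only [Matrix.sub_apply, Matrix.mul_diagonal, Matrix.diagonal_mul, hDdef, hFdef]
    rw [hBH i j]
    have hmc := Complex.mul_conj (B i j)
    push_cast
    linear_combination ((((lam j ^ s : ℝ):ℂ) - ((lam i ^ s : ℝ):ℂ)) *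
      (((lam i ^ t : ℝ):ℂ) - ((lam j ^ t : ℝ):ℂ))) * hmc
  -- rewrite the integral as a real number
  set g : ℝ → ℝ := fun s => ∑ i, ∑ j, F i j s (1 - s) with hgdef
  have hint : (∫ s in (0:ℝ)..1,
      ((A * mpow π hπ.1 s - mpow π hπ.1 s * A) *
        (A * mpow π hπ.1 (1 - s) - mpow π hπ.1 (1 - s) * A)).trace)
      = ((-(∫ s in (0:ℝ)..1, g s) : ℝ) : ℂ) := by
    have h1 : (∫ s in (0:ℝ)..1,
        ((A * mpow π hπ.1 s - mpow π hπ.1 s * A) *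
          (A * mpow π hπ.1 (1 - s) - mpow π hπ.1 (1 - s) * A)).trace)
        = ∫ s in (0:ℝ)..1, ((-(g s) : ℝ) : ℂ) := by
      refine intervalIntegral.integral_congr fun s _ => ?_
      rw [key s (1 - s)]
    rw [h1, intervalIntegral.integral_ofReal, intervalIntegral.integral_neg]
  have hgnn : ∀ s ∈ Set.Icc (0:ℝ) 1, 0 ≤ g s := by
    intro s hs
    refine Finset.sum_nonneg fun i _ => Finset.sum_nonneg fun j _ => ?_
    simp only [hFdef]
    refine mul_nonneg (Complex.normSq_nonneg _) ?_
    have hposi : (0:ℝ) < lam i := hπ.eigenvalues_pos i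
    have hposj : (0:ℝ) < lam j := hπ.eigenvalues_pos j
    rcases le_total (lam i) (lam j) with h | h
    · have h1 : lam i ^ s ≤ lam j ^ s := Real.rpow_le_rpow hposi.le h hs.1
      have h2 : lam i ^ (1-s) ≤ lam j ^ (1-s) :=
        Real.rpow_le_rpow hposi.le h (by linarith [hs.2])
      nlinarith
    · have h1 : lam j ^ s ≤ lam i ^ s := Real.rpow_le_rpow hposj.le h hs.1
      have h2 : lam j ^ (1-s) ≤ lam i ^ (1-s) :=
        Real.rpow_le_rpow hposj.le h (by linarith [hs.2])
      nlinarith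
  have hintnn : 0 ≤ ∫ s in (0:ℝ)..1, g s :=
    intervalIntegral.integral_nonneg (by norm_num) hgnn
  rw [hint]
  refine ⟨by simp, ?_, ?_⟩
  · have : (-(1/2:ℂ)) * ((-(∫ s in (0:ℝ)..1, g s) : ℝ) : ℂ)
        = (((1/2) * (∫ s in (0:ℝ)..1, g s) : ℝ) : ℂ) := by push_cast; ring
    rw [this, Complex.ofReal_re]
    positivity
  · intro hcomm
    -- commuting case: each term vanishes
    have hBD : ∀ i j, B i j = 0 ∨ lam i = lam j := by
      have hspec : π = U * Matrix.diagonal (fun i => ((lam i : ℝ) : ℂ)) * star U := by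
        convert hπ.1.spectral_theorem using 1
        rw [Unitary.conjStarAlgAut_apply]
        rfl
      have h2 : B * Matrix.diagonal (fun i => ((lam i : ℝ) : ℂ))
          - Matrix.diagonal (fun i => ((lam i : ℝ) : ℂ)) * B
          = star U * (A * π - π * A) * U := by
        rw [hspec, hBdef]
        rw [Matrix.mul_sub, Matrix.sub_mul]
        congr 1 <;> simp only [mul_assoc, hc1, hc2, hU1, hU2, Matrix.mul_one, mul_one]
      rw [hcomm] at h2
      simp only [Matrix.mul_zero, Matrix.zero_mul] at h2
      intro i j
      have h3 := congrFun (congrFun h2 i) j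
      simp only [Matrix.sub_apply, Matrix.mul_diagonal, Matrix.diagonal_mul,
        Matrix.zero_apply] at h3
      have h4 : B i j * (((lam j : ℝ):ℂ) - ((lam i : ℝ):ℂ)) = 0 := by linear_combination h3
      rcases mul_eq_zero.1 h4 with h | h
      · exact Or.inl h
      · right
        have : ((lam j : ℝ):ℂ) = ((lam i : ℝ):ℂ) := by linear_combination h
        exact_mod_cast this.symm
    have hg0 : ∀ s : ℝ, g s = 0 := by
      intro s
      refine Finset.sum_eq_zero fun i _ => Finset.sum_eq_zero fun j _ => ?_
      simp only [hFdef]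
      rcases hBD i j with h | h
      · simp [h]
      · rw [h]; ring
    have : (∫ s in (0:ℝ)..1, g s) = 0 := by
      simp only [hg0]
      simp
    rw [this]
    simp
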